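/- Fix a canonical mechanism M(φ, x₁,…,x_{2d+1}), a Devil strategy σ guaranteeing ¬γ, and the degree-of-immorality measure ‖·‖. For every k ≥ 0 and every action profile s, if either γ holds at s, or k > 0 and some agent is k-order responsible under s, then ‖s‖ ≤ k. -/

import Mathlib

/-- A sequential decision-making mechanism has `n` agents acting in order; agent `i`
controls an action block of type `A i` (the Boolean valuations of its variable block),
and the deontic constraint is a predicate `γ` on action profiles.
`Resp γ d i s` says that agent `i` is `d`-order responsible under profile `s`:
`R^d_i = Gap_{d-1} ∧ ∃v_i ∀v_{i+1} … ∀v_n ¬Gap_{d-1}`,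
where `Gap_{d-1} = ¬γ ∧ ⋀_{j≤n} ⋀_{1≤e<d} ¬R^e_j`. -/
def Resp {n : ℕ} {A : Fin n → Type} (γ : (∀ i, A i) → Prop) :
    (d : ℕ) → Fin n → (∀ i, A i) → Prop
  | 0, _, _ => False
  | d+1, i, s =>
    (¬ γ s ∧ ∀ e ≤ d, ∀ j, ¬ Resp γ e j s) ∧
    ∃ t : ∀ i', A i', (∀ j, j < i → t j = s j) ∧
      ∀ u : ∀ i', A i', (∀ j, j ≤ i → u j = t j) →
        ¬ (¬ γ u ∧ ∀ e ≤ d, ∀ j, ¬ Resp γ e j u)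
termination_by d => d
decreasing_by all_goals omega

/-- A mechanism is `d`-gap-free if for every profile violating the deontic constraint
there are `d' ≤ d` and an agent who is `d'`-order responsible. -/
def GapFree {n : ℕ} {A : Fin n → Type} (γ : (∀ i, A i) → Prop) (d : ℕ) : Prop :=
  ∀ s, ¬ γ s → ∃ d' ≤ d, ∃ i, Resp γ d' i s

/-- Action block of agent `i` in the canonical mechanism `M(φ, x₁,…,x_{2d+1})`:
the original block `X i`, extended by one fresh Boolean variable `q` exactly when
`i` is even in 1-based counting (odd in 0-based counting); for the other agents the
extension is the empty block `Fin 0 → Bool`. -/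
def CanA {d : ℕ} (X : Fin (2*d+1) → Type) (i : Fin (2*d+1)) : Type :=
  X i × (Fin ((i : ℕ) % 2) → Bool)

/-- Deontic constraint of the canonical mechanism: `γ = φ ∧ ⋀_{1≤i≤d} q_{2i}`. -/
def canGamma {d : ℕ} (X : Fin (2*d+1) → Type) (φ : (∀ i, X i) → Prop)
    (s : ∀ i, CanA X i) : Prop :=
  φ (fun i => (s i).1) ∧ ∀ i, ∀ j, (s i).2 j = true

/-- `s` conforms to the Devil strategy `σ`: every odd-numbered (1-based; even
0-based) block of `s` is the one prescribed by `σ`. -/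
def Conform {n : ℕ} {A : Fin n → Type}
    (σ : ∀ i : Fin n, (∀ j, A j) → A i) (s : ∀ i, A i) : Prop :=
  ∀ i : Fin n, (i : ℕ) % 2 = 0 → s i = σ i s

open Classical in
/-- The degree of immorality `‖s‖`: one sin for each fresh variable `q_{2i}`
that is false under `s`, plus one sin if `s` conforms to the Devil strategy `σ`. -/
noncomputable def immorality {d : ℕ} {X : Fin (2*d+1) → Type}
    (σ : ∀ i : Fin (2*d+1), (∀ j, CanA X j) → CanA X i)
    (s : ∀ i, CanA X i) : ℕ :=
  (Finset.univ.filter (fun i : Fin (2*d+1) => ∃ j, (s i).2 j = false)).card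
  + (if Conform σ s then 1 else 0)

noncomputable def devilFill {d : ℕ} {X : Fin (2*d+1) → Type}
    (σ : ∀ i : Fin (2*d+1), (∀ j, CanA X j) → CanA X i)
    (t u : ∀ i, CanA X i) (j : Fin (2*d+1)) :
    ∀ i : Fin (2*d+1), CanA X i
  | i =>
    if i ≤ j then t i
    else if _h2 : (i : ℕ) % 2 = 1 then ((u i).1, fun _ => false)
    else σ i fun p => if h : (p : ℕ) < (i : ℕ) then devilFill σ t u j p else u p
  termination_by i => (i : ℕ)

section lemmas
variable {d : ℕ} {X : Fin (2*d+1) → Type}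
    (σ : ∀ i : Fin (2*d+1), (∀ j, CanA X j) → CanA X i)
    (t u : ∀ i, CanA X i) (j : Fin (2*d+1))

lemma devilFill_le {i : Fin (2*d+1)} (h : i ≤ j) : devilFill σ t u j i = t i := by
  rw [devilFill]; simp [h]

lemma devilFill_odd {i : Fin (2*d+1)} (h : ¬ i ≤ j) (h2 : (i : ℕ) % 2 = 1) :
    devilFill σ t u j i = ((u i).1, fun _ => false) := by
  rw [devilFill]; simp [h, h2]; rfl

lemma devilFill_even
    (hstrat : ∀ (i : Fin (2*d+1)) (s t : ∀ j, CanA X j),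
      (∀ j, j < i → s j = t j) → σ i s = σ i t)
    {i : Fin (2*d+1)} (h : ¬ i ≤ j) (h2 : (i : ℕ) % 2 = 0) :
    devilFill σ t u j i = σ i (devilFill σ t u j) := by
  conv_lhs => rw [devilFill]
  rw [if_neg h]
  refine (dif_neg (show ¬ ((i : ℕ) % 2 = 1) by omega)).trans ?_
  refine hstrat i _ _ (fun p hp => ?_)
  exact dif_pos hp

lemma sin_odd {s : ∀ i, CanA X i} {i : Fin (2*d+1)}
    (h : ∃ k, (s i).2 k = false) : (i : ℕ) % 2 = 1 := by
  obtain ⟨k, -⟩ := h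
  have := k.2
  omega
end lemmas

section main
variable {d : ℕ} {X : Fin (2*d+1) → Type} {φ : (∀ i, X i) → Prop}
    {σ : ∀ i : Fin (2*d+1), (∀ j, CanA X j) → CanA X i}

lemma conform_devilFill
    (hstrat : ∀ (i : Fin (2*d+1)) (s t : ∀ j, CanA X j),
      (∀ j, j < i → s j = t j) → σ i s = σ i t)
    (t u : ∀ i, CanA X i) (j : Fin (2*d+1))
    (ht : ∀ p, p < j → t p = u p) (hj : (j : ℕ) % 2 = 1)
    (hu : Conform σ u) : Conform σ (devilFill σ t u j) := by
  intro i hi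
  rcases le_or_gt i j with hle | hlt
  · have hij : i < j := lt_of_le_of_ne hle (by rintro rfl; omega)
    have hwp : ∀ p, p < i → devilFill σ t u j p = u p := fun p hp => by
      rw [devilFill_le σ t u j (le_of_lt (hp.trans hij)), ht p (hp.trans hij)]
    rw [devilFill_le σ t u j hle, ht i hij, hu i hi,
      hstrat i (devilFill σ t u j) u hwp]
  · exact devilFill_even σ t u j hstrat (not_le.2 hlt) hi

lemma immorality_devilFill
    (hstrat : ∀ (i : Fin (2*d+1)) (s t : ∀ j, CanA X j),
      (∀ j, j < i → s j = t j) → σ i s = σ i t)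
    (t u : ∀ i, CanA X i) (j : Fin (2*d+1))
    (ht : ∀ p, p < j → t p = u p) :
    immorality σ u ≤ immorality σ (devilFill σ t u j) + 1 := by
  set w := devilFill σ t u j with hw
  simp only [immorality, Finset.filter_congr_decidable]
  set A : Finset (Fin (2*d+1)) :=
    Finset.univ.filter (fun i => (∃ k, (u i).2 k = false) ∧ i < j) with hA
  set B : Finset (Fin (2*d+1)) :=
    Finset.univ.filter (fun i => j < i ∧ (i : ℕ) % 2 = 1) with hB
  have hwu : ∀ p, p < j → w p = u p := fun p hp => by
    rw [hw, devilFill_le σ t u j (le_of_lt hp), ht p hp]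
  have hdisj : Disjoint A B := by
    rw [Finset.disjoint_left]
    intro a ha hb
    simp only [hA, hB, Finset.mem_filter] at ha hb
    exact absurd (ha.2.2.trans hb.2.1) (lt_irrefl a)
  have hsub : A ∪ B ⊆ Finset.univ.filter (fun i => ∃ k, (w i).2 k = false) := by
    intro a ha
    simp only [Finset.mem_union, hA, hB, Finset.mem_filter, Finset.mem_univ,
      true_and] at ha ⊢
    rcases ha with ⟨hk, hlt⟩ | ⟨hlt, hodd⟩
    · rwa [hwu a hlt]
    · rw [hw, devilFill_odd σ t u j (not_le.2 hlt) hodd]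
      exact ⟨⟨0, by omega⟩, rfl⟩
  have hcardw : A.card + B.card ≤
      (Finset.univ.filter (fun i => ∃ k, (w i).2 k = false)).card := by
    rw [← Finset.card_union_of_disjoint hdisj]
    exact Finset.card_le_card hsub
  have hsubu : (Finset.univ.filter (fun i => ∃ k, (u i).2 k = false)) ⊆
      insert j (A ∪ B) := by
    intro a ha
    simp only [Finset.mem_filter, Finset.mem_univ, true_and] at ha
    simp only [Finset.mem_insert, Finset.mem_union, hA, hB, Finset.mem_filter,
      Finset.mem_univ, true_and]
    rcases lt_trichotomy a j with h | h | h
    · exact Or.inr (Or.inl ⟨ha, h⟩)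
    · exact Or.inl h
    · exact Or.inr (Or.inr ⟨h, sin_odd ha⟩)
  have hcardu : (Finset.univ.filter (fun i => ∃ k, (u i).2 k = false)).card ≤
      A.card + B.card + 1 := by
    calc _ ≤ (insert j (A ∪ B)).card := Finset.card_le_card hsubu
    _ ≤ (A ∪ B).card + 1 := Finset.card_insert_le _ _
    _ ≤ A.card + B.card + 1 := by
        rw [Finset.card_union_of_disjoint hdisj]
  rcases Nat.even_or_odd (j : ℕ) with hj | hj
  · -- j even: j carries no sin
    have hjnot : j ∉ Finset.univ.filter (fun i : Fin (2*d+1) => ∃ k, (u i).2 k = false) := by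
      simp only [Finset.mem_filter, Finset.mem_univ, true_and]
      intro h
      have h2 := sin_odd h
      have h0 := Nat.even_iff.1 hj
      omega
    have hsubu' : (Finset.univ.filter (fun i => ∃ k, (u i).2 k = false)) ⊆ A ∪ B := by
      intro a ha
      rcases Finset.mem_insert.1 (hsubu ha) with rfl | h
      · exact absurd ha hjnot
      · exact h
    have h1 : (Finset.univ.filter (fun i => ∃ k, (u i).2 k = false)).card ≤
        A.card + B.card := by
      rw [← Finset.card_union_of_disjoint hdisj]
      exact Finset.card_le_card hsubu'
    by_cases hcu : Conform σ u <;> by_cases hcw : Conform σ w <;>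
      simp only [hcu, hcw, if_true, if_false, if_pos, if_neg, not_false_iff] <;>
      omega
  · -- j odd: conformity is preserved
    by_cases hcu : Conform σ u
    · have hcw : Conform σ w := conform_devilFill hstrat t u j ht (Nat.odd_iff.1 hj) hcu
      rw [if_pos hcu, if_pos hcw]
      omega
    · rw [if_neg hcu]
      by_cases hcw : Conform σ w
      · rw [if_pos hcw]; omega
      · rw [if_neg hcw]; omega
end main

section final
variable {d : ℕ} {X : Fin (2*d+1) → Type} {φ : (∀ i, X i) → Prop}
    {σ : ∀ i : Fin (2*d+1), (∀ j, CanA X j) → CanA X i}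

lemma immorality_eq_zero
    (hguar : ∀ s, Conform σ s → ¬ canGamma X φ s)
    (u : ∀ i, CanA X i) (hγ : canGamma X φ u) : immorality σ u = 0 := by
  simp only [immorality]
  rw [if_neg (fun hc => hguar u hc hγ)]
  have hmem : ∀ i ∈ (Finset.univ : Finset (Fin (2*d+1))),
      ¬ ∃ k, (u i).2 k = false := by
    rintro i - ⟨k, hk⟩
    rw [hγ.2 i k] at hk
    simp at hk
  rw [Finset.filter_false_of_mem hmem, Finset.card_empty]

lemma keyLemma
    (hstrat : ∀ (i : Fin (2*d+1)) (s t : ∀ j, CanA X j),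
      (∀ j, j < i → s j = t j) → σ i s = σ i t)
    (hguar : ∀ s, Conform σ s → ¬ canGamma X φ s) :
    ∀ k, ∀ u : ∀ i, CanA X i, k + 1 ≤ immorality σ u →
      ¬ canGamma X φ u ∧ ∀ e ≤ k, ∀ j, ¬ Resp (canGamma X φ) e j u := by
  intro k
  induction k using Nat.strong_induction_on with
  | _ k IH =>
    intro u hcard
    have hnγ : ¬ canGamma X φ u := by
      intro hγ
      have h0 := immorality_eq_zero hguar u hγ
      omega
    refine ⟨hnγ, ?_⟩
    intro e he j hresp
    match e, he, hresp with
    | 0, _, hresp => simp only [Resp] at hresp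
    | e'+1, he, hresp =>
      simp only [Resp] at hresp
      obtain ⟨⟨hγu, hgap⟩, t, ht, hall⟩ := hresp
      have hc : immorality σ u ≤ immorality σ (devilFill σ t u j) + 1 :=
        immorality_devilFill hstrat t u j ht
      have hw := IH e' (by omega) (devilFill σ t u j) (by omega)
      exact hall (devilFill σ t u j) (fun p hp => devilFill_le σ t u j hp)
        ⟨hw.1, fun f hf j' => hw.2 f hf j'⟩


/-- For every `k ≥ 0` and profile `s`, if either the deontic constraint holds at
`s`, or `k > 0` and some agent is `k`-order responsible under `s`, then the
degree of immorality of `s` is at most `k`. -/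
theorem immorality_le_order {d : ℕ} (X : Fin (2*d+1) → Type)
    (φ : (∀ i, X i) → Prop)
    (σ : ∀ i : Fin (2*d+1), (∀ j, CanA X j) → CanA X i)
    (hstrat : ∀ (i : Fin (2*d+1)) (s t : ∀ j, CanA X j),
      (∀ j, j < i → s j = t j) → σ i s = σ i t)
    (hguar : ∀ s, Conform σ s → ¬ canGamma X φ s) :
    ∀ (k : ℕ) (s : ∀ i, CanA X i),
      (canGamma X φ s ∨ (0 < k ∧ ∃ i, Resp (canGamma X φ) k i s)) →
      immorality σ s ≤ k := by
  intro k s h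
  rcases h with hγ | ⟨hk, i, hresp⟩
  · rw [immorality_eq_zero hguar s hγ]
    exact Nat.zero_le k
  · by_contra hlt
    push_neg at hlt
    exact (keyLemma hstrat hguar k s (by omega)).2 k le_rfl i hresp

end final
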